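/- For all natural numbers ℓ, k_1, k_2 with k_1 + k_2 ≤ ℓ and all naturals α, β with α < 2^ℓ and β < 2^ℓ, there exists bit ∈ {0,1} such that ⌊((α + 2^ℓ − β) mod 2^ℓ)/2^{k_1}⌋ ≡ ⌊α/2^{k_1}⌋ − ⌊β/2^{k_1}⌋ − bit (mod 2^{ℓ−k_1−k_2}), as a congruence of integers, where (α + 2^ℓ − β) mod 2^ℓ represents the difference α − β in Z_{2^ℓ}. -/

import Mathlib

private lemma div_cast_eq (K : ℕ) (n : ℕ) (q u : ℤ)
    (hn : (n : ℤ) = u + q * K) (h0 : 0 ≤ u) (h1 : u < K) :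
    ((n / K : ℕ) : ℤ) = q := by
  have hK : (K : ℤ) ≠ 0 := by
    intro h
    rw [h] at h1; omega
  rw [Int.natCast_div, hn, Int.add_mul_ediv_right _ _ hK,
    Int.ediv_eq_zero_of_lt h0 h1, zero_add]

theorem stmt_9 (ℓ k₁ k₂ : ℕ) (hk : k₁ + k₂ ≤ ℓ) (α β : ℕ)
    (hα : α < 2 ^ ℓ) (hβ : β < 2 ^ ℓ) :
    ∃ bit : ℕ, bit ≤ 1 ∧
      Int.ModEq (2 ^ (ℓ - k₁ - k₂))
        (((α + 2 ^ ℓ - β) % 2 ^ ℓ / 2 ^ k₁ : ℕ) : ℤ)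
        (((α / 2 ^ k₁ : ℕ) : ℤ) - ((β / 2 ^ k₁ : ℕ) : ℤ) - (bit : ℤ)) := by
  set K := 2 ^ k₁ with hKdef
  have hKpos : 0 < K := Nat.pow_pos (by norm_num)
  set γ := (α + 2 ^ ℓ - β) % 2 ^ ℓ with hγdef
  set t : ℕ := if β ≤ α then 0 else 1 with htdef
  -- γ as an integer equals α - β + t * 2^ℓ
  have hγ : (γ : ℤ) = (α : ℤ) - β + t * 2 ^ ℓ := by
    by_cases h : β ≤ α
    · have h1 : α + 2 ^ ℓ - β = (α - β) + 2 ^ ℓ := by omega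
      have h2 : γ = α - β := by
        rw [hγdef, h1, Nat.add_mod_right, Nat.mod_eq_of_lt (by omega)]
      rw [h2, htdef, if_pos h]
      push_cast [h]
      omega
    · have h2 : γ = α + 2 ^ ℓ - β := by
        rw [hγdef, Nat.mod_eq_of_lt (by omega)]
      rw [h2, htdef, if_neg h]
      have hle : β ≤ α + 2 ^ ℓ := by omega
      push_cast [hle]
      omega
  set bit : ℕ := if β % K ≤ α % K then 0 else 1 with hbitdef
  refine ⟨bit, by rw [hbitdef]; split <;> norm_num, ?_⟩
  have hαd : (α : ℤ) = K * (α / K : ℕ) + (α % K : ℕ) := by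
    push_cast [Int.natCast_div]
    rw [Int.mul_ediv_add_emod]
  have hβd : (β : ℤ) = K * (β / K : ℕ) + (β % K : ℕ) := by
    push_cast [Int.natCast_div]
    rw [Int.mul_ediv_add_emod]
  have hαr : α % K < K := Nat.mod_lt _ hKpos
  have hβr : β % K < K := Nat.mod_lt _ hKpos
  have hpow : (K : ℤ) * 2 ^ (ℓ - k₁) = 2 ^ ℓ := by
    rw [hKdef]; push_cast
    rw [← pow_add]
    congr 1
    omega
  have hc : ((γ / K : ℕ) : ℤ) =
      ((α / K : ℕ) : ℤ) - ((β / K : ℕ) : ℤ) - bit + t * 2 ^ (ℓ - k₁) := by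
    apply div_cast_eq K γ _ (((α % K : ℕ) : ℤ) - ((β % K : ℕ) : ℤ) + bit * K)
    · rw [hγ]
      nth_rewrite 1 [hαd, hβd]
      rw [← hpow]
      ring
    · rw [hbitdef]; split <;> push_cast <;> omega
    · rw [hbitdef]; split <;> push_cast <;> omega
  rw [hc]
  have hdvd : (2 : ℤ) ^ (ℓ - k₁ - k₂) ∣ (t : ℤ) * 2 ^ (ℓ - k₁) :=
    Dvd.dvd.mul_left (pow_dvd_pow 2 (by omega)) _
  have := (Int.modEq_iff_dvd.mpr (by simpa using hdvd) :
    Int.ModEq (2 ^ (ℓ - k₁ - k₂)) ((t : ℤ) * 2 ^ (ℓ - k₁)) 0)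
  calc ((α / K : ℕ) : ℤ) - ((β / K : ℕ) : ℤ) - bit + t * 2 ^ (ℓ - k₁)
      ≡ ((α / K : ℕ) : ℤ) - ((β / K : ℕ) : ℤ) - bit + 0 [ZMOD 2 ^ (ℓ - k₁ - k₂)] :=
        Int.ModEq.add_left _ this
    _ = ((α / K : ℕ) : ℤ) - ((β / K : ℕ) : ℤ) - bit := by ring
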